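/- For every k ≥ 1, the porous exponential domination number of the k-th Apollonian network satisfies γ*_e(G_k) ≥ ⌈(2k + 5)/12⌉. -/

import Mathlib

/-- A family of Apollonian networks, given by a vertex set `Vert` together with a
generation labeling `gen` and an adjacency relation `adj`, satisfying the recursive
construction: the first generation `U₁` consists of three pairwise adjacent vertices
(forming `G₁`); and for each `k ≥ 1`, for each vertex `u` of generation `k` and each
adjacent pair `{x, y}` of neighbors of `u` in `G_k`, exactly one new vertex of
generation `k + 1` is created, adjacent to exactly `u`, `x`, and `y`.
The `k`-th Apollonian network `G_k` is the induced subgraph on the vertices of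
generation at most `k`. -/
structure ApollonianNetwork where
  Vert : Type
  adj : Vert → Vert → Prop
  adj_symm : ∀ a b, adj a b → adj b a
  adj_irrefl : ∀ a, ¬ adj a a
  gen : Vert → ℕ
  gen_pos : ∀ v, 1 ≤ gen v
  /-- The first generation consists of exactly three vertices. -/
  U1_card : ∃ a b c : Vert, a ≠ b ∧ a ≠ c ∧ b ≠ c ∧ {v | gen v = 1} = {a, b, c}
  /-- `G₁` is a complete graph on the first generation. -/
  U1_complete : ∀ a b, gen a = 1 → gen b = 1 → a ≠ b → adj a b
  /-- All edges join vertices of distinct generations, except within generation 1. -/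
  adj_gen : ∀ a b, adj a b → gen a = gen b → gen a = 1
  /-- Every vertex `v` of generation `k ≥ 2` is adjacent, among the vertices of earlier
  generations, to exactly three vertices `u`, `x`, `y`, where `u` has generation `k - 1`
  and `x`, `y` are neighbors of `u` in `G_{k-1}` that are adjacent to each other. -/
  created : ∀ v, 2 ≤ gen v → ∃ u x y,
    gen u = gen v - 1 ∧ gen x ≤ gen v - 1 ∧ gen y ≤ gen v - 1 ∧
    adj u x ∧ adj u y ∧ adj x y ∧
    {w | adj v w ∧ gen w < gen v} = {u, x, y}
  /-- For each `k ≥ 1`, each vertex `u` of generation `k`, and each adjacent pair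
  `{x, y}` of neighbors of `u` in `G_k`, there is exactly one vertex of generation
  `k + 1` whose neighbors in `G_{k+1}` are exactly `u`, `x`, and `y`. -/
  attach : ∀ k, 1 ≤ k → ∀ u x y,
    gen u = k → gen x ≤ k → gen y ≤ k → x ≠ y →
    adj u x → adj u y → adj x y →
    ∃! v, gen v = k + 1 ∧ {w | adj v w ∧ gen w ≤ k} = ({u, x, y} : Set Vert)

/-- The `k`-th Apollonian network `G_k`: the induced subgraph on the vertices of
generation at most `k`. -/
def ApollonianNetwork.G (A : ApollonianNetwork) (k : ℕ) :
    SimpleGraph {v : A.Vert // A.gen v ≤ k} where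
  Adj a b := A.adj a b
  symm := ⟨fun a b h => A.adj_symm a b h⟩
  loopless := ⟨fun a h => A.adj_irrefl a h⟩

open Classical in
/-- The porous exponential domination weight of a set `S` at a vertex `v`:
`∑_{u ∈ S} 1 / 2 ^ (d(u, v) - 1)`, where vertices at infinite distance from `v`
contribute `0`.  (Note `2 * (1/2) ^ d = 1 / 2 ^ (d - 1)` including for `d = 0`.) -/
noncomputable def expWeight {V : Type*} (G : SimpleGraph V) (S : Finset V) (v : V) : ℝ :=
  ∑ u ∈ S, if G.Reachable u v then 2 * (2 : ℝ)⁻¹ ^ G.dist u v else 0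

/-- `S` is a porous exponential dominating set for `G` if every vertex receives
total weight at least 1. -/
def IsPorousExpDomSet {V : Type*} (G : SimpleGraph V) (S : Finset V) : Prop :=
  ∀ v, 1 ≤ expWeight G S v

/-- The porous exponential domination number `γ*ₑ(G)`: the smallest cardinality of a
porous exponential dominating set for `G` (`⊤` if there is none). -/
noncomputable def porousExpDomNum {V : Type*} (G : SimpleGraph V) : ℕ∞ :=
  sInf {n : ℕ∞ | ∃ S : Finset V, IsPorousExpDomSet G S ∧ (S.card : ℕ∞) = n}

lemma lipschitz_walk {V : Type} (G : SimpleGraph V) (f : V → ℤ)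
    (hf : ∀ a b, G.Adj a b → f a ≤ f b + 1) {u v : V} (p : G.Walk u v) :
    f u ≤ f v + p.length := by
  induction p with
  | nil => simp
  | cons h q ih =>
    have := hf _ _ h
    simp only [SimpleGraph.Walk.length_cons]
    push_cast
    omega

lemma lipschitz_dist {V : Type} (G : SimpleGraph V) (f : V → ℤ)
    (hf : ∀ a b, G.Adj a b → f a ≤ f b + 1) {u v : V} (h : G.Reachable u v) :
    f u - f v ≤ (G.dist u v : ℤ) := by
  obtain ⟨p, hp⟩ := h.exists_walk_length_eq_dist
  have := lipschitz_walk G f hf p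
  omega

lemma my_dist_triangle {V : Type} (G : SimpleGraph V) {u v w : V}
    (h1 : G.Reachable u v) (h2 : G.Reachable v w) :
    G.dist u w ≤ G.dist u v + G.dist v w := by
  obtain ⟨p, hp⟩ := h1.exists_walk_length_eq_dist
  obtain ⟨q, hq⟩ := h2.exists_walk_length_eq_dist
  calc G.dist u w ≤ (p.append q).length := G.dist_le _
    _ = G.dist u v + G.dist v w := by rw [SimpleGraph.Walk.length_append, hp, hq]

lemma farFamily {V : Type} (G : SimpleGraph V) (S : Finset V)
    (hS : IsPorousExpDomSet G S) (t r : ℕ) (x : Fin t → V)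
    (hfar : ∀ i j, i ≠ j → G.Reachable (x i) (x j) → 2 * r + 1 ≤ G.dist (x i) (x j)) :
    t ≤ S.card ∨ 2 ^ r ≤ S.card := by
  classical
  by_cases h : ∀ i, ∃ u ∈ S, G.Reachable u (x i) ∧ G.dist u (x i) ≤ r
  · left
    choose f hf1 hf2 hf3 using h
    have hinj : Function.Injective f := by
      intro i j hij
      by_contra hne
      have hreach : G.Reachable (x i) (x j) := ((hf2 i).symm).trans (hij ▸ hf2 j)
      have h1 : G.dist (x i) (x j) ≤ G.dist (x i) (f i) + G.dist (f i) (x j) :=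
        my_dist_triangle G (hf2 i).symm (hij ▸ hf2 j)
      have h2 : G.dist (x i) (f i) = G.dist (f i) (x i) := G.dist_comm
      have := hfar i j hne hreach
      have := hf3 i
      have := hf3 j
      rw [hij] at *
      omega
    calc t = (Finset.univ.image f).card := by
            rw [Finset.card_image_of_injective _ hinj]; simp
      _ ≤ S.card := Finset.card_le_card (by intro u hu; simp at hu; obtain ⟨i, rfl⟩ := hu; exact hf1 i)
  · right
    push_neg at h
    obtain ⟨i, hi⟩ := h
    have hw := hS (x i)
    have hbound : expWeight G S (x i) ≤ S.card * ((2:ℝ)⁻¹ ^ r) := by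
      unfold expWeight
      calc ∑ u ∈ S, (if G.Reachable u (x i) then 2 * (2:ℝ)⁻¹ ^ G.dist u (x i) else 0)
          ≤ ∑ _u ∈ S, ((2:ℝ)⁻¹ ^ r) := by
            apply Finset.sum_le_sum
            intro u hu
            by_cases hre : G.Reachable u (x i)
            · simp only [hre, if_true]
              have hd : r + 1 ≤ G.dist u (x i) := hi u hu hre
              have : (2:ℝ)⁻¹ ^ G.dist u (x i) ≤ (2:ℝ)⁻¹ ^ (r+1) :=
                pow_le_pow_of_le_one (by norm_num) (by norm_num) hd
              calc 2 * (2:ℝ)⁻¹ ^ G.dist u (x i) ≤ 2 * (2:ℝ)⁻¹ ^ (r+1) := by linarith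
                _ = (2:ℝ)⁻¹ ^ r := by ring
            · simp only [hre, if_false]
              positivity
        _ = S.card * ((2:ℝ)⁻¹ ^ r) := by rw [Finset.sum_const, nsmul_eq_mul]
    have h2r : (2:ℝ) ^ r ≤ S.card := by
      have hpos : (0:ℝ) < (2:ℝ)⁻¹ ^ r := by positivity
      have := le_trans hw hbound
      have h22 : (2:ℝ)⁻¹ ^ r = ((2:ℝ)^r)⁻¹ := by rw [inv_pow]
      rw [h22] at this
      have hp2 : (0:ℝ) < (2:ℝ)^r := by positivity
      calc (2:ℝ)^r = (2:ℝ)^r * 1 := by ring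
        _ ≤ (2:ℝ)^r * (S.card * ((2:ℝ)^r)⁻¹) := by
            apply mul_le_mul_of_nonneg_left this (le_of_lt hp2)
        _ = S.card := by field_simp
    exact_mod_cast h2r


namespace ApollonianNetwork
open Classical

variable (A : ApollonianNetwork)

/-- The set of earlier-generation neighbours of a vertex. -/
def low (v : A.Vert) : Set A.Vert := {w | A.adj v w ∧ A.gen w < A.gen v}

/-- A triangle whose top vertex is `u`. -/
def Tri (u x y : A.Vert) : Prop :=
  A.gen x ≤ A.gen u ∧ A.gen y ≤ A.gen u ∧ x ≠ y ∧ A.adj u x ∧ A.adj u y ∧ A.adj x y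

variable {A}

lemma Tri.ux {u x y : A.Vert} (h : A.Tri u x y) : u ≠ x :=
  fun he => A.adj_irrefl x (he ▸ h.2.2.2.1)

lemma Tri.uy {u x y : A.Vert} (h : A.Tri u x y) : u ≠ y :=
  fun he => A.adj_irrefl y (he ▸ h.2.2.2.2.1)

variable (A)

/-- The canonical creating triple of a vertex. -/
noncomputable def tripOf (v : A.Vert) : A.Vert × A.Vert × A.Vert :=
  if h : 2 ≤ A.gen v then
    let e := A.created v h
    ⟨e.choose, e.choose_spec.choose, e.choose_spec.choose_spec.choose⟩
  else ⟨v, v, v⟩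

lemma tripOf_spec {v : A.Vert} (h : 2 ≤ A.gen v) :
    A.gen (A.tripOf v).1 = A.gen v - 1 ∧ A.gen (A.tripOf v).2.1 ≤ A.gen v - 1 ∧
    A.gen (A.tripOf v).2.2 ≤ A.gen v - 1 ∧
    A.adj (A.tripOf v).1 (A.tripOf v).2.1 ∧ A.adj (A.tripOf v).1 (A.tripOf v).2.2 ∧
    A.adj (A.tripOf v).2.1 (A.tripOf v).2.2 ∧
    A.low v = {(A.tripOf v).1, (A.tripOf v).2.1, (A.tripOf v).2.2} := by
  unfold tripOf
  rw [dif_pos h]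
  exact (A.created v h).choose_spec.choose_spec.choose_spec

lemma tripOf_gen_lt {v : A.Vert} (h : 2 ≤ A.gen v) :
    A.gen (A.tripOf v).1 < A.gen v ∧ A.gen (A.tripOf v).2.1 < A.gen v ∧
    A.gen (A.tripOf v).2.2 < A.gen v := by
  obtain ⟨h1, h2, h3, -⟩ := A.tripOf_spec h
  omega

/-- The unique child of a triangle. -/
noncomputable def child (u x y : A.Vert) : A.Vert :=
  if h : A.Tri u x y then
    (A.attach (A.gen u) (A.gen_pos u) u x y rfl h.1 h.2.1 h.2.2.1 h.2.2.2.1 h.2.2.2.2.1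
      h.2.2.2.2.2).exists.choose
  else u

lemma child_spec {u x y : A.Vert} (h : A.Tri u x y) :
    A.gen (A.child u x y) = A.gen u + 1 ∧
    {w | A.adj (A.child u x y) w ∧ A.gen w ≤ A.gen u} = ({u, x, y} : Set A.Vert) := by
  unfold child
  rw [dif_pos h]
  exact (A.attach (A.gen u) (A.gen_pos u) u x y rfl h.1 h.2.1 h.2.2.1 h.2.2.2.1 h.2.2.2.2.1
      h.2.2.2.2.2).exists.choose_spec

lemma child_gen {u x y : A.Vert} (h : A.Tri u x y) :
    A.gen (A.child u x y) = A.gen u + 1 := (A.child_spec h).1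

lemma child_low {u x y : A.Vert} (h : A.Tri u x y) :
    A.low (A.child u x y) = ({u, x, y} : Set A.Vert) := by
  have hs := (A.child_spec h).2
  have hg := (A.child_spec h).1
  rw [← hs]
  unfold low
  ext w
  simp only [Set.mem_setOf_eq, hg]
  constructor
  · rintro ⟨ha, hb⟩; exact ⟨ha, by omega⟩
  · rintro ⟨ha, hb⟩; exact ⟨ha, by omega⟩

lemma child_adj₁ {u x y : A.Vert} (h : A.Tri u x y) : A.adj (A.child u x y) u := by
  have := A.child_low h
  have : u ∈ A.low (A.child u x y) := by rw [this]; left; rfl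
  exact this.1

lemma child_adj₂ {u x y : A.Vert} (h : A.Tri u x y) : A.adj (A.child u x y) x := by
  have := A.child_low h
  have : x ∈ A.low (A.child u x y) := by rw [this]; right; left; rfl
  exact this.1

lemma child_adj₃ {u x y : A.Vert} (h : A.Tri u x y) : A.adj (A.child u x y) y := by
  have := A.child_low h
  have : y ∈ A.low (A.child u x y) := by rw [this]; right; right; rfl
  exact this.1

/-- The step triple for a child: `(child u x y, u, x)` is again a triangle. -/
lemma child_tri {u x y : A.Vert} (h : A.Tri u x y) : A.Tri (A.child u x y) u x := by
  have h1 := h.1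
  refine ⟨?_, ?_, h.ux, A.child_adj₁ h, A.child_adj₂ h, h.2.2.2.1⟩ <;>
    · rw [A.child_gen h]; omega


/-! ### Descent chains -/

/-- Iterated descent state: `(newest, previous, one before)`. -/
noncomputable def descS (u x y : A.Vert) : ℕ → A.Vert × A.Vert × A.Vert
  | 0 => (A.child u x y, u, x)
  | n+1 =>
    (A.child (descS u x y n).1 (descS u x y n).2.1 (descS u x y n).2.2,
      (descS u x y n).1, (descS u x y n).2.1)

noncomputable def desc (u x y : A.Vert) (n : ℕ) : A.Vert := (A.descS u x y n).1

variable {A}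

lemma descS_tri {u x y : A.Vert} (h : A.Tri u x y) :
    ∀ n, A.Tri (A.descS u x y n).1 (A.descS u x y n).2.1 (A.descS u x y n).2.2 := by
  intro n
  induction n with
  | zero => exact A.child_tri h
  | succ n ih => exact A.child_tri ih

lemma desc_gen {u x y : A.Vert} (h : A.Tri u x y) (n : ℕ) :
    A.gen (A.desc u x y n) = A.gen u + 1 + n := by
  induction n with
  | zero => exact A.child_gen h
  | succ n ih =>
    have : A.desc u x y (n+1) = A.child (A.descS u x y n).1 (A.descS u x y n).2.1
        (A.descS u x y n).2.2 := rfl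
    rw [this, A.child_gen (descS_tri h n)]
    rw [show (A.descS u x y n).1 = A.desc u x y n from rfl, ih]
    omega

lemma desc_low_zero {u x y : A.Vert} (h : A.Tri u x y) :
    A.low (A.desc u x y 0) = {u, x, y} := A.child_low h

lemma desc_low_succ {u x y : A.Vert} (h : A.Tri u x y) (n : ℕ) :
    A.low (A.desc u x y (n+1)) =
      {A.desc u x y n, (A.descS u x y n).2.1, (A.descS u x y n).2.2} :=
  A.child_low (descS_tri h n)

lemma descS_snd_succ (u x y : A.Vert) (n : ℕ) :
    (A.descS u x y (n+1)).2.1 = A.desc u x y n ∧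
    (A.descS u x y (n+1)).2.2 = (A.descS u x y n).2.1 := ⟨rfl, rfl⟩

lemma desc_low_one {u x y : A.Vert} (h : A.Tri u x y) :
    A.low (A.desc u x y 1) = {A.desc u x y 0, u, x} := desc_low_succ h 0

lemma desc_low_two {u x y : A.Vert} (h : A.Tri u x y) :
    A.low (A.desc u x y 2) = {A.desc u x y 1, A.desc u x y 0, u} := desc_low_succ h 1

lemma desc_low_three {u x y : A.Vert} (h : A.Tri u x y) (n : ℕ) :
    A.low (A.desc u x y (n+3)) =
      {A.desc u x y (n+2), A.desc u x y (n+1), A.desc u x y n} := by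
  rw [desc_low_succ h (n+2)]
  rfl

/-- Restarting the descent from an intermediate state gives a shift. -/
lemma descS_shift (u x y : A.Vert) (n m : ℕ) :
    A.descS (A.descS u x y n).1 (A.descS u x y n).2.1 (A.descS u x y n).2.2 m =
      A.descS u x y (n + 1 + m) := by
  induction m with
  | zero => rfl
  | succ m ih =>
    show (A.child (A.descS _ _ _ m).1 (A.descS _ _ _ m).2.1 (A.descS _ _ _ m).2.2,
      (A.descS _ _ _ m).1, (A.descS _ _ _ m).2.1) = _
    rw [show n + 1 + (m+1) = (n + 1 + m) + 1 from rfl]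
    show _ = (A.child (A.descS u x y (n+1+m)).1 (A.descS u x y (n+1+m)).2.1
      (A.descS u x y (n+1+m)).2.2, (A.descS u x y (n+1+m)).1, (A.descS u x y (n+1+m)).2.1)
    rw [ih]

/-! ### The region potential -/

variable (A)

noncomputable def gT (p q r : A.Vert) : ℕ := max (A.gen p) (max (A.gen q) (A.gen r))

noncomputable def potA (p q r : A.Vert) : ℕ → A.Vert → ℕ
  | 0, _ => 0
  | n+1, v =>
    if v = p ∨ v = q ∨ v = r then 1
    else if A.gen v ≤ A.gT p q r then 0
    else
      let t := A.tripOf v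
      let m := min (potA p q r n t.1) (min (potA p q r n t.2.1) (potA p q r n t.2.2))
      if m = 0 then 0 else m + 1

noncomputable def pot (p q r : A.Vert) (v : A.Vert) : ℕ := A.potA p q r (A.gen v) v

variable {A}

section Pot

variable (p q r : A.Vert)

lemma gT_pos : 1 ≤ A.gT p q r := le_trans (A.gen_pos p) (le_max_left _ _)

lemma potA_congr : ∀ v : A.Vert, ∀ n m : ℕ, A.gen v ≤ n → A.gen v ≤ m →
    A.potA p q r n v = A.potA p q r m v := by
  have H : ∀ g : ℕ, ∀ v : A.Vert, A.gen v ≤ g → ∀ n m : ℕ, A.gen v ≤ n → A.gen v ≤ m →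
      A.potA p q r n v = A.potA p q r m v := by
    intro g
    induction g with
    | zero => intro v hv; have := A.gen_pos v; omega
    | succ g ih =>
      intro v hv n m hn hm
      have hg1 := A.gen_pos v
      obtain ⟨n', rfl⟩ : ∃ n', n = n' + 1 := ⟨n - 1, by omega⟩
      obtain ⟨m', rfl⟩ : ∃ m', m = m' + 1 := ⟨m - 1, by omega⟩
      show A.potA p q r (n'+1) v = A.potA p q r (m'+1) v
      unfold potA
      by_cases h1 : v = p ∨ v = q ∨ v = r
      · rw [if_pos h1, if_pos h1]
      · rw [if_neg h1, if_neg h1]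
        by_cases h2 : A.gen v ≤ A.gT p q r
        · rw [if_pos h2, if_pos h2]
        · rw [if_neg h2, if_neg h2]
          have h2' : 2 ≤ A.gen v := by
            have := gT_pos (A := A) p q r; omega
          obtain ⟨hg1', hg2', hg3'⟩ := A.tripOf_gen_lt h2'
          simp only [ih (A.tripOf v).1 (by omega) n' m' (by omega) (by omega),
              ih (A.tripOf v).2.1 (by omega) n' m' (by omega) (by omega),
              ih (A.tripOf v).2.2 (by omega) n' m' (by omega) (by omega)]
  intro v n m hn hm
  exact H (A.gen v) v le_rfl n m hn hm

lemma pot_mem {v : A.Vert} (h : v = p ∨ v = q ∨ v = r) : A.pot p q r v = 1 := by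
  have hg1 := A.gen_pos v
  obtain ⟨n', hn⟩ : ∃ n', A.gen v = n' + 1 := ⟨A.gen v - 1, by omega⟩
  unfold pot
  rw [hn]
  unfold potA
  rw [if_pos h]

lemma pot_cap {v : A.Vert} (h : ¬(v = p ∨ v = q ∨ v = r)) (h2 : A.gen v ≤ A.gT p q r) :
    A.pot p q r v = 0 := by
  have hg1 := A.gen_pos v
  obtain ⟨n', hn⟩ : ∃ n', A.gen v = n' + 1 := ⟨A.gen v - 1, by omega⟩
  unfold pot
  rw [hn]
  unfold potA
  rw [if_neg h, if_pos h2]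

lemma pot_rec {v : A.Vert} (h : ¬(v = p ∨ v = q ∨ v = r)) (h2 : A.gT p q r < A.gen v) :
    A.pot p q r v =
      (if min (A.pot p q r (A.tripOf v).1)
          (min (A.pot p q r (A.tripOf v).2.1) (A.pot p q r (A.tripOf v).2.2)) = 0 then 0
        else min (A.pot p q r (A.tripOf v).1)
          (min (A.pot p q r (A.tripOf v).2.1) (A.pot p q r (A.tripOf v).2.2)) + 1) := by
  have hg1 := A.gen_pos v
  have hgT := gT_pos (A := A) p q r
  have h2' : 2 ≤ A.gen v := by omega
  obtain ⟨n', hn⟩ : ∃ n', A.gen v = n' + 1 := ⟨A.gen v - 1, by omega⟩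
  obtain ⟨hg1', hg2', hg3'⟩ := A.tripOf_gen_lt h2'
  conv_lhs => rw [pot, hn]
  unfold potA
  rw [if_neg h, if_neg (by omega)]
  simp only [potA_congr p q r (A.tripOf v).1 n' (A.gen (A.tripOf v).1) (by omega) le_rfl,
      potA_congr p q r (A.tripOf v).2.1 n' (A.gen (A.tripOf v).2.1) (by omega) le_rfl,
      potA_congr p q r (A.tripOf v).2.2 n' (A.gen (A.tripOf v).2.2) (by omega) le_rfl]
  rfl

lemma pot_le_one {v : A.Vert} (h2 : A.gen v ≤ A.gT p q r) : A.pot p q r v ≤ 1 := by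
  by_cases h : v = p ∨ v = q ∨ v = r
  · rw [pot_mem p q r h]
  · rw [pot_cap p q r h h2]; omega

end Pot

section Pot2

variable (p q r : A.Vert)

lemma min3_le_of_mem (g : A.Vert → ℕ) {a b c w : A.Vert} (h : w = a ∨ w = b ∨ w = c) :
    min (g a) (min (g b) (g c)) ≤ g w := by
  rcases h with rfl | rfl | rfl <;> omega

lemma min3_attain (g : A.Vert → ℕ) (a b c : A.Vert) :
    min (g a) (min (g b) (g c)) = g a ∨ min (g a) (min (g b) (g c)) = g b ∨
      min (g a) (min (g b) (g c)) = g c := by omega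

lemma min3_congr (g : A.Vert → ℕ) {a b c d e f : A.Vert}
    (h : ({a, b, c} : Set A.Vert) = {d, e, f}) :
    min (g a) (min (g b) (g c)) = min (g d) (min (g e) (g f)) := by
  have hmem : ∀ w : A.Vert, (w = a ∨ w = b ∨ w = c) ↔ (w = d ∨ w = e ∨ w = f) := by
    intro w
    have := Set.ext_iff.1 h w
    simpa using this
  apply le_antisymm
  · exact le_min (min3_le_of_mem g ((hmem d).2 (by tauto)))
      (le_min (min3_le_of_mem g ((hmem e).2 (by tauto)))
        (min3_le_of_mem g ((hmem f).2 (by tauto))))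
  · exact le_min (min3_le_of_mem g ((hmem a).1 (by tauto)))
      (le_min (min3_le_of_mem g ((hmem b).1 (by tauto)))
        (min3_le_of_mem g ((hmem c).1 (by tauto))))

lemma pot_computed {v a b c : A.Vert} (hmem : ¬(v = p ∨ v = q ∨ v = r))
    (hgt : A.gT p q r < A.gen v) (h2 : 2 ≤ A.gen v)
    (hlow : A.low v = {a, b, c}) :
    A.pot p q r v =
      if min (A.pot p q r a) (min (A.pot p q r b) (A.pot p q r c)) = 0 then 0
      else min (A.pot p q r a) (min (A.pot p q r b) (A.pot p q r c)) + 1 := by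
  rw [pot_rec p q r hmem hgt]
  have hset : ({(A.tripOf v).1, (A.tripOf v).2.1, (A.tripOf v).2.2} : Set A.Vert)
      = {a, b, c} := ((A.tripOf_spec h2).2.2.2.2.2.2).symm.trans hlow
  rw [min3_congr (A.pot p q r) hset]

lemma pot_ge_two {v : A.Vert} (h : 2 ≤ A.pot p q r v) :
    A.gT p q r < A.gen v ∧ ¬(v = p ∨ v = q ∨ v = r) ∧ 2 ≤ A.gen v ∧
      ∀ w ∈ A.low v, 1 ≤ A.pot p q r w := by
  by_cases hmem : v = p ∨ v = q ∨ v = r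
  · rw [pot_mem p q r hmem] at h; omega
  by_cases hcap : A.gen v ≤ A.gT p q r
  · rw [pot_cap p q r hmem hcap] at h; omega
  push_neg at hcap
  have hgT := gT_pos (A := A) p q r
  have h2 : 2 ≤ A.gen v := by omega
  refine ⟨hcap, hmem, h2, ?_⟩
  rw [pot_rec p q r hmem hcap] at h
  by_cases hm : min (A.pot p q r (A.tripOf v).1)
      (min (A.pot p q r (A.tripOf v).2.1) (A.pot p q r (A.tripOf v).2.2)) = 0
  · rw [if_pos hm] at h; omega
  intro w hw
  rw [(A.tripOf_spec h2).2.2.2.2.2.2] at hw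
  simp only [Set.mem_insert_iff, Set.mem_singleton_iff] at hw
  have := min3_le_of_mem (A.pot p q r) hw
  omega

lemma pot_inv : ∀ v : A.Vert, 2 ≤ A.gen v →
    ∀ w, (w = v ∨ w ∈ A.low v) → ∀ w', (w' = v ∨ w' ∈ A.low v) →
    (A.pot p q r w : ℤ) - A.pot p q r w' ≤ 1 := by
  have hgT := gT_pos (A := A) p q r
  have H : ∀ g : ℕ, ∀ v : A.Vert, A.gen v ≤ g → 2 ≤ A.gen v →
      ∀ w, (w = v ∨ w ∈ A.low v) → ∀ w', (w' = v ∨ w' ∈ A.low v) →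
      (A.pot p q r w : ℤ) - A.pot p q r w' ≤ 1 := by
    intro g
    induction g with
    | zero => intro v hv h2; omega
    | succ g ih =>
      intro v hv h2 w hw w' hw'
      obtain ⟨hg1, hg2, hg3, hadj12, hadj13, hadj23, hlowset⟩ := A.tripOf_spec h2
      set t1 := (A.tripOf v).1 with ht1
      set t2 := (A.tripOf v).2.1 with ht2
      set t3 := (A.tripOf v).2.2 with ht3
      -- spread on the lower triangle
      have hspread : ∀ a ∈ A.low v, ∀ b ∈ A.low v,
          (A.pot p q r a : ℤ) - A.pot p q r b ≤ 1 := by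
        intro a ha b hb
        rw [hlowset] at ha hb
        simp only [Set.mem_insert_iff, Set.mem_singleton_iff] at ha hb
        by_cases hgen1 : A.gen t1 = 1
        · -- all three have generation 1
          have hga : A.gen a = 1 := by
            have := A.gen_pos a
            rcases ha with rfl | rfl | rfl <;> omega
          have hgb : A.gen b = 1 := by
            have := A.gen_pos b
            rcases hb with rfl | rfl | rfl <;> omega
          have h1 : A.pot p q r a ≤ 1 := pot_le_one p q r (by omega)
          have h0 : 0 ≤ A.pot p q r b := Nat.zero_le _
          omega
        · have hgen2 : 2 ≤ A.gen t1 := by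
            have := A.gen_pos t1; omega
          have hmem2 : t2 ∈ A.low t1 := by
            refine ⟨hadj12, ?_⟩
            rcases Nat.lt_or_ge (A.gen t2) (A.gen t1) with h | h
            · exact h
            · exfalso
              have heq : A.gen t1 = A.gen t2 := by omega
              have := A.adj_gen t1 t2 hadj12 heq
              omega
          have hmem3 : t3 ∈ A.low t1 := by
            refine ⟨hadj13, ?_⟩
            rcases Nat.lt_or_ge (A.gen t3) (A.gen t1) with h | h
            · exact h
            · exfalso
              have heq : A.gen t1 = A.gen t3 := by omega
              have := A.adj_gen t1 t3 hadj13 heq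
              omega
          have ha' : a = t1 ∨ a ∈ A.low t1 := by
            rcases ha with rfl | rfl | rfl
            · left; rfl
            · right; exact hmem2
            · right; exact hmem3
          have hb' : b = t1 ∨ b ∈ A.low t1 := by
            rcases hb with rfl | rfl | rfl
            · left; rfl
            · right; exact hmem2
            · right; exact hmem3
          exact ih t1 (by omega) hgen2 a ha' b hb'
      -- bounds between v and its lower triangle
      have hlow_lt : ∀ a ∈ A.low v, A.gen a < A.gen v := fun a ha => ha.2
      have hup : ∀ a ∈ A.low v, (A.pot p q r v : ℤ) - A.pot p q r a ≤ 1 := by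
        intro a ha
        by_cases hmem : v = p ∨ v = q ∨ v = r
        · rw [pot_mem p q r hmem]
          have : 0 ≤ A.pot p q r a := Nat.zero_le _
          omega
        by_cases hcap : A.gen v ≤ A.gT p q r
        · rw [pot_cap p q r hmem hcap]
          omega
        push_neg at hcap
        rw [pot_rec p q r hmem hcap, ← ht1, ← ht2, ← ht3]
        by_cases hm : min (A.pot p q r t1) (min (A.pot p q r t2) (A.pot p q r t3)) = 0
        · rw [if_pos hm]; omega
        · rw [if_neg hm]
          have hmm : min (A.pot p q r t1) (min (A.pot p q r t2) (A.pot p q r t3))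
              ≤ A.pot p q r a := by
            apply min3_le_of_mem
            have : a ∈ ({t1, t2, t3} : Set A.Vert) := hlowset ▸ ha
            simpa using this
          omega
      have hdn : ∀ a ∈ A.low v, (A.pot p q r a : ℤ) - A.pot p q r v ≤ 1 := by
        intro a ha
        by_cases hmem : v = p ∨ v = q ∨ v = r
        · rw [pot_mem p q r hmem]
          have hvg : A.gen v ≤ A.gT p q r := by
            rcases hmem with rfl | rfl | rfl
            · exact le_max_left _ _
            · exact le_trans (le_max_left _ _) (le_max_right _ _)
            · exact le_trans (le_max_right _ _) (le_max_right _ _)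
          have : A.pot p q r a ≤ 1 := pot_le_one p q r (by have := hlow_lt a ha; omega)
          omega
        by_cases hcap : A.gen v ≤ A.gT p q r
        · rw [pot_cap p q r hmem hcap]
          have : A.pot p q r a ≤ 1 := pot_le_one p q r (by have := hlow_lt a ha; omega)
          omega
        push_neg at hcap
        rw [pot_rec p q r hmem hcap, ← ht1, ← ht2, ← ht3]
        -- the minimum is attained at some member of the triangle
        have hatt := min3_attain (A.pot p q r) t1 t2 t3
        have hmemt : ∀ s : A.Vert, (s = t1 ∨ s = t2 ∨ s = t3) → s ∈ A.low v := by
          intro s hs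
          rw [hlowset]
          simpa using hs
        obtain ⟨s, hs, hsval⟩ : ∃ s ∈ A.low v, A.pot p q r s =
            min (A.pot p q r t1) (min (A.pot p q r t2) (A.pot p q r t3)) := by
          rcases hatt with h | h | h
          · exact ⟨t1, hmemt t1 (by tauto), h.symm⟩
          · exact ⟨t2, hmemt t2 (by tauto), h.symm⟩
          · exact ⟨t3, hmemt t3 (by tauto), h.symm⟩
        have hspr := hspread a ha s hs
        by_cases hm : min (A.pot p q r t1) (min (A.pot p q r t2) (A.pot p q r t3)) = 0
        · rw [if_pos hm]; omega
        · rw [if_neg hm]; omega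
      rcases hw with rfl | hw <;> rcases hw' with rfl | hw'
      · omega
      · exact hup w' hw'
      · exact hdn w hw
      · exact hspread w hw w' hw'
  intro v h2
  exact H (A.gen v) v le_rfl h2

/-- The potential is 1-Lipschitz along edges. -/
lemma pot_lip {v w : A.Vert} (h : A.adj v w) :
    (A.pot p q r v : ℤ) - A.pot p q r w ≤ 1 := by
  have hgT := gT_pos (A := A) p q r
  rcases Nat.lt_trichotomy (A.gen v) (A.gen w) with hlt | heq | hgt
  · have h2 : 2 ≤ A.gen w := by have := A.gen_pos v; omega
    exact pot_inv p q r w h2 v (Or.inr ⟨A.adj_symm v w h, hlt⟩) w (Or.inl rfl)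
  · have h1 := A.adj_gen v w h heq
    have hv : A.pot p q r v ≤ 1 := pot_le_one p q r (by omega)
    have : 0 ≤ A.pot p q r w := Nat.zero_le _
    omega
  · have h2 : 2 ≤ A.gen v := by have := A.gen_pos w; omega
    exact pot_inv p q r v h2 v (Or.inl rfl) w (Or.inr ⟨h, hgt⟩)

end Pot2

section Pot3

variable (p q r : A.Vert)

lemma pot_pos_cases {v : A.Vert} (h : 1 ≤ A.pot p q r v) :
    (v = p ∨ v = q ∨ v = r) ∨ 2 ≤ A.pot p q r v := by
  by_cases hmem : v = p ∨ v = q ∨ v = r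
  · exact Or.inl hmem
  by_cases hcap : A.gen v ≤ A.gT p q r
  · rw [pot_cap p q r hmem hcap] at h; omega
  push_neg at hcap
  right
  rw [pot_rec p q r hmem hcap] at h ⊢
  by_cases hm : min (A.pot p q r (A.tripOf v).1)
      (min (A.pot p q r (A.tripOf v).2.1) (A.pot p q r (A.tripOf v).2.2)) = 0
  · rw [if_pos hm] at h; omega
  · rw [if_neg hm] at h ⊢; omega

lemma pot_mem_gen_le {v : A.Vert} (h : v = p ∨ v = q ∨ v = r) :
    A.gen v ≤ A.gT p q r := by
  unfold gT
  rcases h with rfl | rfl | rfl <;> omega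

/-- Nesting: a triangle whose vertices lie in the closure of another region has its
interior inside the latter's interior. -/
lemma pot_nest {p' q' r' : A.Vert}
    (hg : A.gT p q r ≤ A.gT p' q' r')
    (hel : ∀ w, (w = p' ∨ w = q' ∨ w = r') → 1 ≤ A.pot p q r w) :
    ∀ v, 2 ≤ A.pot p' q' r' v → 2 ≤ A.pot p q r v := by
  have H : ∀ g : ℕ, ∀ v : A.Vert, A.gen v ≤ g →
      2 ≤ A.pot p' q' r' v → 2 ≤ A.pot p q r v := by
    intro g
    induction g with
    | zero => intro v hv; have := A.gen_pos v; omega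
    | succ g ih =>
      intro v hv h
      obtain ⟨hgt', hmem', h2, hlow'⟩ := pot_ge_two p' q' r' h
      have hgt : A.gT p q r < A.gen v := by omega
      have hmem : ¬(v = p ∨ v = q ∨ v = r) := by
        intro hc
        have := pot_mem_gen_le p q r hc
        omega
      rw [pot_rec p q r hmem hgt]
      obtain ⟨hg1, hg2, hg3, hadj12, hadj13, hadj23, hlowset⟩ := A.tripOf_spec h2
      have hmemlow : ∀ w : A.Vert, (w = (A.tripOf v).1 ∨ w = (A.tripOf v).2.1 ∨
          w = (A.tripOf v).2.2) → w ∈ A.low v := by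
        intro w hw; rw [hlowset]; simpa using hw
      have hone : ∀ w ∈ A.low v, 1 ≤ A.pot p q r w := by
        intro w hw
        have h1' := hlow' w hw
        rcases pot_pos_cases p' q' r' h1' with hc | hc
        · exact hel w hc
        · have hwg : A.gen w < A.gen v := hw.2
          have := ih w (by omega) hc
          omega
      have e1 := hone (A.tripOf v).1 (hmemlow (A.tripOf v).1 (Or.inl rfl))
      have e2 := hone (A.tripOf v).2.1 (hmemlow (A.tripOf v).2.1 (Or.inr (Or.inl rfl)))
      have e3 := hone (A.tripOf v).2.2 (hmemlow (A.tripOf v).2.2 (Or.inr (Or.inr rfl)))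
      have hm : ¬ (min (A.pot p q r (A.tripOf v).1)
          (min (A.pot p q r (A.tripOf v).2.1) (A.pot p q r (A.tripOf v).2.2)) = 0) := by
        omega
      rw [if_neg hm]
      omega
  intro v
  exact H (A.gen v) v le_rfl

/-- Interior disjointness of two triangles sharing at most two vertices. -/
lemma pot_disj {p' q' r' : A.Vert}
    (h1 : ∀ w, (w = p ∨ w = q ∨ w = r) → ¬ 2 ≤ A.pot p' q' r' w)
    (h2 : ∀ w, (w = p' ∨ w = q' ∨ w = r') → ¬ 2 ≤ A.pot p q r w)
    (h3 : ∀ w1 w2 w3 : A.Vert,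
      (w1 = p ∨ w1 = q ∨ w1 = r) → (w1 = p' ∨ w1 = q' ∨ w1 = r') →
      (w2 = p ∨ w2 = q ∨ w2 = r) → (w2 = p' ∨ w2 = q' ∨ w2 = r') →
      (w3 = p ∨ w3 = q ∨ w3 = r) → (w3 = p' ∨ w3 = q' ∨ w3 = r') →
      w1 = w2 ∨ w1 = w3 ∨ w2 = w3) :
    ∀ v, ¬(2 ≤ A.pot p q r v ∧ 2 ≤ A.pot p' q' r' v) := by
  have H : ∀ g : ℕ, ∀ v : A.Vert, A.gen v ≤ g →
      ¬(2 ≤ A.pot p q r v ∧ 2 ≤ A.pot p' q' r' v) := by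
    intro g
    induction g with
    | zero => intro v hv; have := A.gen_pos v; omega
    | succ g ih =>
      rintro v hv ⟨ha, hb⟩
      obtain ⟨hgt, hmem, h2gen, hlow⟩ := pot_ge_two p q r ha
      obtain ⟨hgt', hmem', -, hlow'⟩ := pot_ge_two p' q' r' hb
      obtain ⟨hg1, hg2, hg3, hadj12, hadj13, hadj23, hlowset⟩ := A.tripOf_spec h2gen
      have hmemlow : ∀ w : A.Vert, (w = (A.tripOf v).1 ∨ w = (A.tripOf v).2.1 ∨
          w = (A.tripOf v).2.2) → w ∈ A.low v := by
        intro w hw; rw [hlowset]; simpa using hw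
      have hboth : ∀ w ∈ A.low v, (w = p ∨ w = q ∨ w = r) ∧
          (w = p' ∨ w = q' ∨ w = r') := by
        intro w hw
        have c1 := pot_pos_cases p q r (hlow w hw)
        have c2 := pot_pos_cases p' q' r' (hlow' w hw)
        have hwg : A.gen w < A.gen v := hw.2
        rcases c1 with c1 | c1 <;> rcases c2 with c2 | c2
        · exact ⟨c1, c2⟩
        · exact absurd c2 (h1 w c1)
        · exact absurd c1 (h2 w c2)
        · exact absurd ⟨c1, c2⟩ (ih w (by omega))
      have b1 := hboth (A.tripOf v).1 (hmemlow (A.tripOf v).1 (Or.inl rfl))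
      have b2 := hboth (A.tripOf v).2.1 (hmemlow (A.tripOf v).2.1 (Or.inr (Or.inl rfl)))
      have b3 := hboth (A.tripOf v).2.2 (hmemlow (A.tripOf v).2.2 (Or.inr (Or.inr rfl)))
      have hd := h3 _ _ _ b1.1 b1.2 b2.1 b2.2 b3.1 b3.2
      -- but the three triple elements are pairwise distinct
      have d12 : (A.tripOf v).1 ≠ (A.tripOf v).2.1 := fun he => A.adj_irrefl _ (he ▸ hadj12)
      have d13 : (A.tripOf v).1 ≠ (A.tripOf v).2.2 := fun he => A.adj_irrefl _ (he ▸ hadj13)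
      have d23 : (A.tripOf v).2.1 ≠ (A.tripOf v).2.2 := fun he => A.adj_irrefl _ (he ▸ hadj23)
      rcases hd with h | h | h
      · exact d12 h
      · exact d13 h
      · exact d23 h
  intro v
  exact H (A.gen v) v le_rfl

/-- Closure disjointness. -/
lemma pot_closure_disj {p' q' r' : A.Vert}
    (h1 : ∀ w, (w = p ∨ w = q ∨ w = r) → ¬ 1 ≤ A.pot p' q' r' w)
    (h2 : ∀ w, (w = p' ∨ w = q' ∨ w = r') → ¬ 1 ≤ A.pot p q r w) :
    ∀ v, ¬(1 ≤ A.pot p q r v ∧ 1 ≤ A.pot p' q' r' v) := by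
  have h1' : ∀ w, (w = p ∨ w = q ∨ w = r) → ¬ 2 ≤ A.pot p' q' r' w :=
    fun w hw hc => h1 w hw (by omega)
  have h2' : ∀ w, (w = p' ∨ w = q' ∨ w = r') → ¬ 2 ≤ A.pot p q r w :=
    fun w hw hc => h2 w hw (by omega)
  have h3 : ∀ w1 w2 w3 : A.Vert,
      (w1 = p ∨ w1 = q ∨ w1 = r) → (w1 = p' ∨ w1 = q' ∨ w1 = r') →
      (w2 = p ∨ w2 = q ∨ w2 = r) → (w2 = p' ∨ w2 = q' ∨ w2 = r') →
      (w3 = p ∨ w3 = q ∨ w3 = r) → (w3 = p' ∨ w3 = q' ∨ w3 = r') →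
      w1 = w2 ∨ w1 = w3 ∨ w2 = w3 := by
    intro w1 w2 w3 a1 a1' _ _ _ _
    exfalso
    exact h1 w1 a1 (by rw [pot_mem p' q' r' a1'])
  rintro v ⟨ha, hb⟩
  rcases pot_pos_cases p q r ha with hc | hc <;> rcases pot_pos_cases p' q' r' hb with hd | hd
  · exact h1 v hc hb
  · exact h1' v hc hd
  · exact h2' v hd hc
  · exact pot_disj p q r h1' h2' h3 v ⟨hc, hd⟩

end Pot3

/-! ### Potential values along descent chains -/

lemma gT_tri {u x y : A.Vert} (h : A.Tri u x y) : A.gT u x y = A.gen u := by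
  have h1 := h.1; have h2 := h.2.1
  unfold gT; omega

lemma desc_not_base {u x y : A.Vert} (h : A.Tri u x y) (n : ℕ) :
    ¬(A.desc u x y n = u ∨ A.desc u x y n = x ∨ A.desc u x y n = y) := by
  have hg := desc_gen h n
  have h1 := h.1; have h2 := h.2.1
  intro hc
  rcases hc with he | he | he <;> rw [he] at hg <;> omega

lemma pot_zero_of_low (p q r : A.Vert) {v a b c : A.Vert}
    (hmem : ¬(v = p ∨ v = q ∨ v = r))
    (hgt : A.gT p q r < A.gen v) (h2 : 2 ≤ A.gen v) (hlow : A.low v = {a, b, c})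
    (hz : A.pot p q r a = 0 ∨ A.pot p q r b = 0 ∨ A.pot p q r c = 0) :
    A.pot p q r v = 0 := by
  rw [pot_computed p q r hmem hgt h2 hlow, if_pos (by omega)]

lemma pot_desc {u x y : A.Vert} (h : A.Tri u x y) :
    ∀ n, A.pot u x y (A.desc u x y n) = 2 + n / 3 := by
  have hgT := gT_tri h
  have h1 := h.1; have h2 := h.2.1
  have hu0 := A.gen_pos u
  have hpu : A.pot u x y u = 1 := pot_mem u x y (Or.inl rfl)
  have hpx : A.pot u x y x = 1 := pot_mem u x y (Or.inr (Or.inl rfl))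
  have hpy : A.pot u x y y = 1 := pot_mem u x y (Or.inr (Or.inr rfl))
  intro n
  induction n using Nat.strong_induction_on with
  | _ n ih =>
    have hgen := desc_gen h n
    have hnb := desc_not_base h n
    have hgt : A.gT u x y < A.gen (A.desc u x y n) := by omega
    have h2g : 2 ≤ A.gen (A.desc u x y n) := by omega
    rcases n with - | n1
    · rw [pot_computed u x y hnb hgt h2g (desc_low_zero h), hpu, hpx, hpy]
      norm_num
    rcases n1 with - | n2
    · rw [pot_computed u x y hnb hgt h2g (desc_low_one h), ih 0 (by omega), hpu, hpx]
      norm_num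
    rcases n2 with - | m
    · rw [pot_computed u x y hnb hgt h2g (desc_low_two h), ih 1 (by omega), ih 0 (by omega),
        hpu]
      norm_num
    · rw [pot_computed u x y hnb hgt h2g (desc_low_three h m), ih (m+2) (by omega),
        ih (m+1) (by omega), ih m (by omega)]
      have hmin : min (2 + (m+2) / 3) (min (2 + (m+1) / 3) (2 + m / 3)) = 2 + m / 3 := by
        omega
      rw [hmin, if_neg (by omega)]
      omega

lemma descS_triple (u x y : A.Vert) (i : ℕ) :
    (A.descS u x y (i+2)).1 = A.desc u x y (i+2) ∧
    (A.descS u x y (i+2)).2.1 = A.desc u x y (i+1) ∧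
    (A.descS u x y (i+2)).2.2 = A.desc u x y i := ⟨rfl, rfl, rfl⟩

lemma tri_desc_triple {u x y : A.Vert} (h : A.Tri u x y) (i : ℕ) :
    A.Tri (A.desc u x y (i+2)) (A.desc u x y (i+1)) (A.desc u x y i) := by
  have := descS_tri h (i+2)
  obtain ⟨e1, e2, e3⟩ := descS_triple (A := A) u x y i
  rwa [e1, e2, e3] at this

lemma desc_of_desc_triple {u x y : A.Vert} (i m : ℕ) :
    A.desc (A.desc u x y (i+2)) (A.desc u x y (i+1)) (A.desc u x y i) m =
      A.desc u x y (i + 3 + m) := by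
  obtain ⟨e1, e2, e3⟩ := descS_triple (A := A) u x y i
  show (A.descS (A.desc u x y (i+2)) (A.desc u x y (i+1)) (A.desc u x y i) m).1 = _
  rw [← e1, ← e2, ← e3, descS_shift]
  rw [show i + 2 + 1 + m = i + 3 + m by omega]
  rfl

/-- Potential relative to an intermediate triangle of a chain. -/
lemma pot_desc_shift {u x y : A.Vert} (h : A.Tri u x y) (i m : ℕ) :
    A.pot (A.desc u x y (i+2)) (A.desc u x y (i+1)) (A.desc u x y i)
      (A.desc u x y (i + 3 + m)) = 2 + m / 3 := by
  have htri := tri_desc_triple h i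
  have := pot_desc htri m
  rwa [desc_of_desc_triple] at this

lemma three_in_two {α : Type*} {w1 w2 w3 z1 z2 : α}
    (h1 : w1 = z1 ∨ w1 = z2) (h2 : w2 = z1 ∨ w2 = z2) (h3 : w3 = z1 ∨ w3 = z2) :
    w1 = w2 ∨ w1 = w3 ∨ w2 = w3 := by
  rcases h1 with rfl | rfl <;> rcases h2 with rfl | rfl <;> rcases h3 with rfl | rfl <;> tauto

lemma desc_inj {u x y : A.Vert} (h : A.Tri u x y) {i j : ℕ}
    (he : A.desc u x y i = A.desc u x y j) : i = j := by
  have hi := desc_gen h i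
  have hj := desc_gen h j
  rw [he] at hi
  omega

end ApollonianNetwork


namespace ApollonianNetwork

variable {A : ApollonianNetwork}

/-- Distance lower bound between points of two regions with disjoint closures. -/
lemma pot_pair_dist {k : ℕ} {p q r p' q' r' : A.Vert}
    (hdisj : ∀ v, ¬(1 ≤ A.pot p q r v ∧ 1 ≤ A.pot p' q' r' v))
    (x y : {v : A.Vert // A.gen v ≤ k})
    (hx : 1 ≤ A.pot p q r x.1) (hy : 1 ≤ A.pot p' q' r' y.1)
    (hreach : (A.G k).Reachable x y) :
    (A.pot p q r x.1 : ℤ) - 1 + A.pot p' q' r' y.1 ≤ ((A.G k).dist x y : ℤ) := by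
  set f : {v : A.Vert // A.gen v ≤ k} → ℤ :=
    fun v => ((A.pot p q r v.1 - 1 : ℕ) : ℤ) - (A.pot p' q' r' v.1 : ℤ) with hf
  have hlip : ∀ a b, (A.G k).Adj a b → f a ≤ f b + 1 := by
    intro a b hab
    have hab' : A.adj a.1 b.1 := hab
    have l1 := pot_lip p q r hab'
    have l2 := pot_lip p q r (A.adj_symm _ _ hab')
    have l3 := pot_lip p' q' r' hab'
    have l4 := pot_lip p' q' r' (A.adj_symm _ _ hab')
    have hd1 := hdisj a.1
    have hd2 := hdisj b.1
    simp only [hf]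
    omega
  have := lipschitz_dist (A.G k) f hlip hreach
  have hx' : A.pot p' q' r' x.1 = 0 := by
    by_contra hc
    exact hdisj x.1 ⟨hx, by omega⟩
  have hy' : A.pot p q r y.1 = 0 := by
    by_contra hc
    exact hdisj y.1 ⟨by omega, hy⟩
  simp only [hf] at this
  rw [hx', hy'] at this
  omega

lemma adj_of_mem_low {v w : A.Vert} (h : w ∈ A.low v) : A.adj v w := h.1

section Families

variable {k : ℕ} {a b c : A.Vert}
  (hab : a ≠ b) (hac : a ≠ c) (hbc : b ≠ c)
  (hga : A.gen a = 1) (hgb : A.gen b = 1) (hgc : A.gen c = 1)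

include hab hac hbc hga hgb hgc

lemma tri_abc : A.Tri a b c :=
  ⟨by omega, by omega, hbc, A.U1_complete a b hga hgb hab,
    A.U1_complete a c hga hgc hac, A.U1_complete b c hgb hgc hbc⟩

lemma case_two (hk : 4 ≤ k) (S : Finset {v : A.Vert // A.gen v ≤ k})
    (hS : IsPorousExpDomSet (A.G k) S) : 2 ≤ S.card := by
  have htri := tri_abc hab hac hbc hga hgb hgc
  set w2 := A.desc a b c 0 with hw2
  set c3 := A.desc a b c 1 with hc3
  have hgw2 : A.gen w2 = 2 := by rw [hw2]; have := desc_gen htri 0; omega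
  have hgc3 : A.gen c3 = 3 := by rw [hc3]; have := desc_gen htri 1; omega
  have hlow_w2 : A.low w2 = {a, b, c} := desc_low_zero htri
  have hlow_c3 : A.low c3 = {w2, a, b} := desc_low_one htri
  have haw2b : A.adj w2 b := adj_of_mem_low (by rw [hlow_w2]; simp)
  have haw2c : A.adj w2 c := adj_of_mem_low (by rw [hlow_w2]; simp)
  have hac3a : A.adj c3 a := adj_of_mem_low (by rw [hlow_c3]; simp)
  have hac3b : A.adj c3 b := adj_of_mem_low (by rw [hlow_c3]; simp)
  have htri1 : A.Tri c3 a b :=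
    ⟨by omega, by omega, hab, hac3a, hac3b, A.U1_complete a b hga hgb hab⟩
  have htrig : A.Tri w2 b c :=
    ⟨by omega, by omega, hbc, haw2b, haw2c, A.U1_complete b c hgb hgc hbc⟩
  set g1 := A.child w2 b c with hg1def
  have hgg1 : A.gen g1 = 3 := by rw [hg1def, A.child_gen htrig]; omega
  have hlow_g1 : A.low g1 = {w2, b, c} := A.child_low htrig
  have hag1w2 : A.adj g1 w2 := A.child_adj₁ htrig
  have hag1c : A.adj g1 c := A.child_adj₃ htrig
  have htri2 : A.Tri g1 c w2 :=
    ⟨by omega, by omega, fun h => by rw [h] at hgc; omega, hag1c, hag1w2,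
      A.adj_symm _ _ haw2c⟩
  have hc3g1 : c3 ≠ g1 := by
    intro he
    have hll : A.low c3 = A.low g1 := by rw [he]
    rw [hlow_c3, hlow_g1] at hll
    have hmm : a ∈ ({w2, b, c} : Set A.Vert) := by
      rw [← hll]; right; left; rfl
    rcases hmm with h | h | h
    · rw [h] at hga; omega
    · exact hab h
    · exact hac h
  have hgT1 : A.gT c3 a b = 3 := by unfold gT; omega
  have hgT2 : A.gT g1 c w2 = 3 := by unfold gT; omega
  have nc3c : c3 ≠ c := fun h => by rw [h] at hgc3; omega
  have nc3w2 : c3 ≠ w2 := fun h => by rw [h] at hgc3; omega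
  have nag1 : a ≠ g1 := fun h => by rw [← h] at hgg1; omega
  have naw2 : a ≠ w2 := fun h => by rw [← h] at hgw2; omega
  have nbg1 : b ≠ g1 := fun h => by rw [← h] at hgg1; omega
  have nbw2 : b ≠ w2 := fun h => by rw [← h] at hgw2; omega
  have hdisj : ∀ v, ¬(1 ≤ A.pot c3 a b v ∧ 1 ≤ A.pot g1 c w2 v) := by
    apply pot_closure_disj
    · rintro w (rfl | rfl | rfl) hc
      · rw [pot_cap g1 c w2 (by simp [hc3g1, nc3c, nc3w2]) (by omega)] at hc; omega
      · rw [pot_cap g1 c w2 (by simp [nag1, hac, naw2]) (by omega)] at hc; omega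
      · rw [pot_cap g1 c w2 (by simp [nbg1, hbc, nbw2]) (by omega)] at hc; omega
    · rintro w (rfl | rfl | rfl) hc
      · rw [pot_cap c3 a b
          (by simp [hc3g1.symm, nag1.symm, nbg1.symm]) (by omega)] at hc; omega
      · rw [pot_cap c3 a b
          (by simp [nc3c.symm, hac.symm, hbc.symm]) (by omega)] at hc; omega
      · rw [pot_cap c3 a b
          (by simp [nc3w2.symm, naw2.symm, nbw2.symm]) (by omega)] at hc; omega
  set x := A.desc c3 a b (k - 4) with hxd
  set y := A.desc g1 c w2 (k - 4) with hyd
  have hgx : A.gen x = k := by rw [hxd]; have := desc_gen htri1 (k-4); omega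
  have hgy : A.gen y = k := by rw [hyd]; have := desc_gen htri2 (k-4); omega
  have hpx : A.pot c3 a b x = 2 + (k-4)/3 := pot_desc htri1 (k-4)
  have hpy : A.pot g1 c w2 y = 2 + (k-4)/3 := pot_desc htri2 (k-4)
  set rr := 1 + (k-4)/3 with hrr
  set X : {v : A.Vert // A.gen v ≤ k} := ⟨x, by omega⟩ with hX
  set Y : {v : A.Vert // A.gen v ≤ k} := ⟨y, by omega⟩ with hY
  have key : (A.G k).Reachable X Y → 2 * rr + 1 ≤ (A.G k).dist X Y := by
    intro hreach
    have hd := pot_pair_dist hdisj X Y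
      (by show 1 ≤ A.pot c3 a b x; omega) (by show 1 ≤ A.pot g1 c w2 y; omega) hreach
    have hx1 : A.pot c3 a b X.1 = 2 + (k-4)/3 := hpx
    have hy1 : A.pot g1 c w2 Y.1 = 2 + (k-4)/3 := hpy
    rw [hx1, hy1] at hd
    omega
  have hfar : ∀ i j : Fin 2, i ≠ j → (A.G k).Reachable (![X, Y] i) (![X, Y] j) →
      2 * rr + 1 ≤ (A.G k).dist (![X, Y] i) (![X, Y] j) := by
    intro i j hij hre
    fin_cases i <;> fin_cases j <;> simp_all only [Matrix.cons_val_zero,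
      Matrix.cons_val_one, Matrix.head_cons, ne_eq, not_true_eq_false]
    · exact key hre
    · rw [SimpleGraph.dist_comm]
      exact key hre.symm
  have hff := farFamily (A.G k) S hS 2 rr ![X, Y] hfar
  have h2r : 2 ≤ 2 ^ rr := by
    calc 2 = 2 ^ 1 := by norm_num
      _ ≤ 2 ^ rr := Nat.pow_le_pow_right (by norm_num) (by omega)
  omega


lemma case_three (hk : 9 ≤ k) (S : Finset {v : A.Vert // A.gen v ≤ k})
    (hS : IsPorousExpDomSet (A.G k) S) : 3 ≤ S.card := by
  have htri := tri_abc hab hac hbc hga hgb hgc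
  set w2 := A.desc a b c 0 with hw2
  set c3 := A.desc a b c 1 with hc3
  have hgw2 : A.gen w2 = 2 := by rw [hw2]; have := desc_gen htri 0; omega
  have hgc3 : A.gen c3 = 3 := by rw [hc3]; have := desc_gen htri 1; omega
  have hlow_w2 : A.low w2 = {a, b, c} := desc_low_zero htri
  have hlow_c3 : A.low c3 = {w2, a, b} := desc_low_one htri
  have haw2a : A.adj w2 a := adj_of_mem_low (by rw [hlow_w2]; left; rfl)
  have haw2b : A.adj w2 b := adj_of_mem_low (by rw [hlow_w2]; right; left; rfl)
  have haw2c : A.adj w2 c := adj_of_mem_low (by rw [hlow_w2]; right; right; rfl)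
  have hac3a : A.adj c3 a := adj_of_mem_low (by rw [hlow_c3]; right; left; rfl)
  have hac3b : A.adj c3 b := adj_of_mem_low (by rw [hlow_c3]; right; right; rfl)
  have htri1 : A.Tri c3 a b :=
    ⟨by omega, by omega, hab, hac3a, hac3b, A.U1_complete a b hga hgb hab⟩
  have htrig : A.Tri w2 b c :=
    ⟨by omega, by omega, hbc, haw2b, haw2c, A.U1_complete b c hgb hgc hbc⟩
  set g1 := A.child w2 b c with hg1def
  have hgg1 : A.gen g1 = 3 := by rw [hg1def, A.child_gen htrig]; omega
  have hlow_g1 : A.low g1 = {w2, b, c} := A.child_low htrig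
  have hag1w2 : A.adj g1 w2 := A.child_adj₁ htrig
  have hag1c : A.adj g1 c := A.child_adj₃ htrig
  have htri2 : A.Tri g1 c w2 :=
    ⟨by omega, by omega, fun h => by rw [h] at hgc; omega, hag1c, hag1w2,
      A.adj_symm _ _ haw2c⟩
  have hc3g1 : c3 ≠ g1 := by
    intro he
    have hll : A.low c3 = A.low g1 := by rw [he]
    rw [hlow_c3, hlow_g1] at hll
    have hmm : a ∈ ({w2, b, c} : Set A.Vert) := by
      rw [← hll]; right; left; rfl
    rcases hmm with h | h | h
    · rw [h] at hga; omega
    · exact hab h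
    · exact hac h
  have nc3a : c3 ≠ a := fun h => by rw [h] at hgc3; omega
  have nc3b : c3 ≠ b := fun h => by rw [h] at hgc3; omega
  have nc3c : c3 ≠ c := fun h => by rw [h] at hgc3; omega
  have nc3w2 : c3 ≠ w2 := fun h => by rw [h] at hgc3; omega
  have nag1 : a ≠ g1 := fun h => by rw [← h] at hgg1; omega
  have naw2 : a ≠ w2 := fun h => by rw [← h] at hgw2; omega
  have nbg1 : b ≠ g1 := fun h => by rw [← h] at hgg1; omega
  have nbw2 : b ≠ w2 := fun h => by rw [← h] at hgw2; omega
  have ncw2 : c ≠ w2 := fun h => by rw [← h] at hgw2; omega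
  have ng1w2 : g1 ≠ w2 := fun h => by rw [h] at hgg1; omega
  have ng1c : g1 ≠ c := fun h => by rw [h] at hgg1; omega
  have hgT1 : A.gT c3 a b = 3 := by unfold gT; omega
  have hgT2 : A.gT g1 c w2 = 3 := by unfold gT; omega
  have hdisj : ∀ v, ¬(1 ≤ A.pot c3 a b v ∧ 1 ≤ A.pot g1 c w2 v) := by
    apply pot_closure_disj
    · rintro w (rfl | rfl | rfl) hcc
      · rw [pot_cap g1 c w2 (by simp [hc3g1, nc3c, nc3w2]) (by omega)] at hcc; omega
      · rw [pot_cap g1 c w2 (by simp [nag1, hac, naw2]) (by omega)] at hcc; omega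
      · rw [pot_cap g1 c w2 (by simp [nbg1, hbc, nbw2]) (by omega)] at hcc; omega
    · rintro w (rfl | rfl | rfl) hcc
      · rw [pot_cap c3 a b
          (by simp [hc3g1.symm, nag1.symm, nbg1.symm]) (by omega)] at hcc; omega
      · rw [pot_cap c3 a b
          (by simp [nc3c.symm, hac.symm, hbc.symm]) (by omega)] at hcc; omega
      · rw [pot_cap c3 a b
          (by simp [nc3w2.symm, naw2.symm, nbw2.symm]) (by omega)] at hcc; omega
  -- the third region: descent into (w2, a, c)
  have htri3 : A.Tri w2 a c :=
    ⟨by omega, by omega, hac, haw2a, haw2c, A.U1_complete a c hga hgc hac⟩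
  have hgp : ∀ i, A.gen (A.desc w2 a c i) = 3 + i := by
    intro i; have := desc_gen htri3 i; omega
  have hgT3 : A.gT w2 a c = 2 := by unfold gT; omega
  have htriT3 : A.Tri (A.desc w2 a c 2) (A.desc w2 a c 1) (A.desc w2 a c 0) :=
    tri_desc_triple htri3 0
  have hpotp : ∀ i, A.pot w2 a c (A.desc w2 a c i) = 2 + i/3 := pot_desc htri3
  -- pot of the base-1 vertex b w.r.t. (w2,a,c) is 0
  have hpb3 : A.pot w2 a c b = 0 :=
    pot_cap w2 a c (by simp [nbw2, hab.symm, hbc]) (by omega)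
  -- pot of c3 w.r.t. (w2,a,c) is 0
  have hpc33 : A.pot w2 a c c3 = 0 :=
    pot_zero_of_low w2 a c (by simp [nc3w2, nc3a, nc3c]) (by omega) (by omega) hlow_c3
      (Or.inr (Or.inr hpb3))
  -- pot of g1 w.r.t. (w2,a,c) is 0
  have hpg13 : A.pot w2 a c g1 = 0 :=
    pot_zero_of_low w2 a c (by simp [ng1w2, nag1.symm, ng1c]) (by omega) (by omega) hlow_g1
      (Or.inr (Or.inl hpb3))
  -- closure of T3' is inside the interior of (w2, a, c)
  have clin3 : ∀ v, 1 ≤ A.pot (A.desc w2 a c 2) (A.desc w2 a c 1) (A.desc w2 a c 0) v →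
      2 ≤ A.pot w2 a c v := by
    intro v hv
    rcases pot_pos_cases _ _ _ hv with hm | hm
    · rcases hm with rfl | rfl | rfl
      · rw [hpotp 2]
      · rw [hpotp 1]
      · rw [hpotp 0]
    · refine pot_nest w2 a c ?_ ?_ v hm
      · rw [gT_tri htriT3, hgp 2]; omega
      · rintro w (rfl | rfl | rfl)
        · rw [hpotp 2]; omega
        · rw [hpotp 1]; omega
        · rw [hpotp 0]; omega
  have hdisj13 : ∀ v, ¬(1 ≤ A.pot c3 a b v ∧
      1 ≤ A.pot (A.desc w2 a c 2) (A.desc w2 a c 1) (A.desc w2 a c 0) v) := by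
    rintro v ⟨h1, h2⟩
    have h2' := clin3 v h2
    rcases pot_pos_cases c3 a b h1 with hm | hm
    · rcases hm with he | he | he <;> rw [he] at h2'
      · omega
      · rw [pot_mem w2 a c (Or.inr (Or.inl rfl))] at h2'; omega
      · omega
    · refine pot_disj c3 a b ?_ ?_ ?_ v ⟨hm, h2'⟩
      · rintro w (he | he | he) hcc <;> rw [he] at hcc
        · omega
        · rw [pot_mem w2 a c (Or.inr (Or.inl rfl))] at hcc; omega
        · omega
      · rintro w (he | he | he) hcc <;> rw [he] at hcc
        · have := pot_le_one c3 a b (v := w2) (by omega); omega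
        · have := pot_le_one c3 a b (v := a) (by omega); omega
        · have := pot_le_one c3 a b (v := c) (by omega); omega
      · intro w1 w2' w3' a1 b1 a2 b2 a3 b3
        have red : ∀ w : A.Vert, (w = c3 ∨ w = a ∨ w = b) →
            (w = w2 ∨ w = a ∨ w = c) → w = a := by
          rintro w (he | he | he) (h | h | h) <;>
            first
            | (exact h)
            | (exact absurd (he.symm.trans h) nc3w2)
            | (exact absurd (he.symm.trans h) nc3a)
            | (exact absurd (he.symm.trans h) nc3c)
            | (exact absurd (he.symm.trans h) naw2)
            | (exact absurd (he.symm.trans h) hac)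
            | (exact absurd (he.symm.trans h) nbw2)
            | (exact absurd (he.symm.trans h).symm hab)
            | (exact absurd (he.symm.trans h) hbc)
        rw [red w1 a1 b1, red w2' a2 b2]
        left; rfl
  have hdisj23 : ∀ v, ¬(1 ≤ A.pot g1 c w2 v ∧
      1 ≤ A.pot (A.desc w2 a c 2) (A.desc w2 a c 1) (A.desc w2 a c 0) v) := by
    rintro v ⟨h1, h2⟩
    have h2' := clin3 v h2
    rcases pot_pos_cases g1 c w2 h1 with hm | hm
    · rcases hm with he | he | he <;> rw [he] at h2'
      · omega
      · rw [pot_mem w2 a c (Or.inr (Or.inr rfl))] at h2'; omega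
      · rw [pot_mem w2 a c (Or.inl rfl)] at h2'; omega
    · refine pot_disj g1 c w2 ?_ ?_ ?_ v ⟨hm, h2'⟩
      · rintro w (he | he | he) hcc <;> rw [he] at hcc
        · omega
        · rw [pot_mem w2 a c (Or.inr (Or.inr rfl))] at hcc; omega
        · rw [pot_mem w2 a c (Or.inl rfl)] at hcc; omega
      · rintro w (he | he | he) hcc <;> rw [he] at hcc
        · have := pot_le_one g1 c w2 (v := w2) (by omega); omega
        · have := pot_le_one g1 c w2 (v := a) (by omega); omega
        · have := pot_le_one g1 c w2 (v := c) (by omega); omega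
      · intro w1 w2' w3' a1 b1 a2 b2 a3 b3
        have red : ∀ w : A.Vert, (w = g1 ∨ w = c ∨ w = w2) →
            (w = w2 ∨ w = a ∨ w = c) → (w = c ∨ w = w2) := by
          rintro w (he | he | he) hb
          · exfalso
            rcases hb with h | h | h
            · exact ng1w2 (he.symm.trans h)
            · exact nag1 (he.symm.trans h).symm
            · exact ng1c (he.symm.trans h)
          · left; exact he
          · right; exact he
        exact three_in_two (red _ a1 b1) (red _ a2 b2) (red _ a3 b3)
  -- targets
  set x := A.desc c3 a b (k - 4) with hxd
  set y := A.desc g1 c w2 (k - 4) with hyd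
  set z := A.desc w2 a c (k - 3) with hzd
  have hgx : A.gen x = k := by rw [hxd]; have := desc_gen htri1 (k-4); omega
  have hgy : A.gen y = k := by rw [hyd]; have := desc_gen htri2 (k-4); omega
  have hgz : A.gen z = k := by rw [hzd]; have := hgp (k-3); omega
  have hpx : A.pot c3 a b x = 2 + (k-4)/3 := pot_desc htri1 (k-4)
  have hpy : A.pot g1 c w2 y = 2 + (k-4)/3 := pot_desc htri2 (k-4)
  have hpz : A.pot (A.desc w2 a c 2) (A.desc w2 a c 1) (A.desc w2 a c 0) z
      = 2 + (k-6)/3 := by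
    have := pot_desc_shift htri3 0 (k-6)
    rw [show 0 + 3 + (k-6) = k - 3 by omega] at this
    exact this
  set rr := 1 + (k-6)/3 with hrr
  have hdm : (k-6)/3 ≤ (k-4)/3 := Nat.div_le_div_right (by omega)
  set X : {v : A.Vert // A.gen v ≤ k} := ⟨x, by omega⟩ with hX
  set Y : {v : A.Vert // A.gen v ≤ k} := ⟨y, by omega⟩ with hY
  set Z : {v : A.Vert // A.gen v ≤ k} := ⟨z, by omega⟩ with hZ
  have keyXY : (A.G k).Reachable X Y → 2 * rr + 1 ≤ (A.G k).dist X Y := by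
    intro hreach
    have hd := pot_pair_dist hdisj X Y
      (by show 1 ≤ A.pot c3 a b x; omega) (by show 1 ≤ A.pot g1 c w2 y; omega) hreach
    have hx1 : A.pot c3 a b X.1 = 2 + (k-4)/3 := hpx
    have hy1 : A.pot g1 c w2 Y.1 = 2 + (k-4)/3 := hpy
    rw [hx1, hy1] at hd
    omega
  have keyXZ : (A.G k).Reachable X Z → 2 * rr + 1 ≤ (A.G k).dist X Z := by
    intro hreach
    have hd := pot_pair_dist hdisj13 X Z
      (by show 1 ≤ A.pot c3 a b x; omega)
      (by show 1 ≤ A.pot (A.desc w2 a c 2) (A.desc w2 a c 1) (A.desc w2 a c 0) z; omega)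
      hreach
    have hx1 : A.pot c3 a b X.1 = 2 + (k-4)/3 := hpx
    have hz1 : A.pot (A.desc w2 a c 2) (A.desc w2 a c 1) (A.desc w2 a c 0) Z.1
        = 2 + (k-6)/3 := hpz
    rw [hx1, hz1] at hd
    omega
  have keyYZ : (A.G k).Reachable Y Z → 2 * rr + 1 ≤ (A.G k).dist Y Z := by
    intro hreach
    have hd := pot_pair_dist hdisj23 Y Z
      (by show 1 ≤ A.pot g1 c w2 y; omega)
      (by show 1 ≤ A.pot (A.desc w2 a c 2) (A.desc w2 a c 1) (A.desc w2 a c 0) z; omega)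
      hreach
    have hy1 : A.pot g1 c w2 Y.1 = 2 + (k-4)/3 := hpy
    have hz1 : A.pot (A.desc w2 a c 2) (A.desc w2 a c 1) (A.desc w2 a c 0) Z.1
        = 2 + (k-6)/3 := hpz
    rw [hy1, hz1] at hd
    omega
  have hfar : ∀ i j : Fin 3, i ≠ j → (A.G k).Reachable (![X, Y, Z] i) (![X, Y, Z] j) →
      2 * rr + 1 ≤ (A.G k).dist (![X, Y, Z] i) (![X, Y, Z] j) := by
    intro i j hij hre
    fin_cases i <;> fin_cases j
    · exact absurd rfl hij
    · exact keyXY hre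
    · exact keyXZ hre
    · rw [SimpleGraph.dist_comm]; exact keyXY hre.symm
    · exact absurd rfl hij
    · exact keyYZ hre
    · rw [SimpleGraph.dist_comm]; exact keyXZ hre.symm
    · rw [SimpleGraph.dist_comm]; exact keyYZ hre.symm
    · exact absurd rfl hij
  have hff := farFamily (A.G k) S hS 3 rr ![X, Y, Z] hfar
  have h2r : 3 ≤ 2 ^ rr := by
    calc 3 ≤ 2 ^ 2 := by norm_num
      _ ≤ 2 ^ rr := Nat.pow_le_pow_right (by norm_num) (by omega)
  omega


lemma case_one (hk : 1 ≤ k) (S : Finset {v : A.Vert // A.gen v ≤ k})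
    (hS : IsPorousExpDomSet (A.G k) S) : 1 ≤ S.card := by
  by_contra h
  have hS0 : S = ∅ := by
    rw [← Finset.card_eq_zero]; omega
  have h1 := hS ⟨a, by omega⟩
  rw [hS0] at h1
  unfold expWeight at h1
  simp at h1
  exact absurd h1 (by norm_num)

end Families

section BigFamily

variable {a b c : A.Vert} (htri : A.Tri a b c)

/-- The `i`-th vertex of the descent chain inside the `j`-th side triangle of the
central chain. -/
noncomputable def chainE (A : ApollonianNetwork) (a b c : A.Vert) (j i : ℕ) : A.Vert :=
  A.desc (A.desc a b c (j+3)) (A.desc a b c (j+2)) (A.desc a b c j) i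

include htri

lemma ch_adj_1 (j : ℕ) : A.adj (A.desc a b c (j+1)) (A.desc a b c j) := by
  rcases j with - | j1
  · exact adj_of_mem_low (by rw [desc_low_one htri]; left; rfl)
  rcases j1 with - | j2
  · exact adj_of_mem_low (by rw [desc_low_two htri]; left; rfl)
  · exact adj_of_mem_low (by rw [desc_low_three htri j2]; left; rfl)

lemma ch_adj_2 (j : ℕ) : A.adj (A.desc a b c (j+2)) (A.desc a b c j) := by
  rcases j with - | j1
  · exact adj_of_mem_low (by rw [desc_low_two htri]; right; left; rfl)
  · exact adj_of_mem_low (by rw [desc_low_three htri j1]; right; left; rfl)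

lemma ch_adj_3 (j : ℕ) : A.adj (A.desc a b c (j+3)) (A.desc a b c j) :=
  adj_of_mem_low (by rw [desc_low_three htri j]; right; right; rfl)

/-- The `j`-th side triangle of the central chain. -/
lemma triS (j : ℕ) :
    A.Tri (A.desc a b c (j+3)) (A.desc a b c (j+2)) (A.desc a b c j) := by
  have g3 := desc_gen htri (j+3)
  have g2 := desc_gen htri (j+2)
  have g0 := desc_gen htri j
  exact ⟨by omega, by omega, fun h => by have := desc_inj htri h; omega,
    ch_adj_1 htri (j+2), ch_adj_3 htri j, ch_adj_2 htri j⟩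

lemma triT (j : ℕ) :
    A.Tri (A.chainE a b c j 3) (A.chainE a b c j 2) (A.chainE a b c j 1) :=
  tri_desc_triple (triS htri j) 1

lemma chainE_gen (j i : ℕ) : A.gen (A.chainE a b c j i) = A.gen a + 5 + j + i := by
  have := desc_gen (triS htri j) i
  have := desc_gen htri (j+3)
  unfold chainE
  omega

lemma potS_E (j i : ℕ) :
    A.pot (A.desc a b c (j+3)) (A.desc a b c (j+2)) (A.desc a b c j)
      (A.chainE a b c j i) = 2 + i / 3 := pot_desc (triS htri j) i

lemma potT_E (j m : ℕ) :
    A.pot (A.chainE a b c j 3) (A.chainE a b c j 2) (A.chainE a b c j 1)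
      (A.chainE a b c j (4 + m)) = 2 + m / 3 := by
  have := pot_desc_shift (triS htri j) 1 m
  rw [show 1 + 3 + m = 4 + m by omega] at this
  exact this

lemma gT_S (j : ℕ) :
    A.gT (A.desc a b c (j+3)) (A.desc a b c (j+2)) (A.desc a b c j) =
      A.gen a + 4 + j := by
  rw [gT_tri (triS htri j), desc_gen htri (j+3)]
  omega

lemma gT_T (j : ℕ) :
    A.gT (A.chainE a b c j 3) (A.chainE a b c j 2) (A.chainE a b c j 1) =
      A.gen a + 8 + j := by
  rw [gT_tri (triT htri j), chainE_gen htri j 3]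
  omega

/-- closure of the inner triangle is inside the interior of the side triangle -/
lemma clin (j : ℕ) : ∀ v, 1 ≤ A.pot (A.chainE a b c j 3) (A.chainE a b c j 2)
      (A.chainE a b c j 1) v →
    2 ≤ A.pot (A.desc a b c (j+3)) (A.desc a b c (j+2)) (A.desc a b c j) v := by
  intro v hv
  rcases pot_pos_cases _ _ _ hv with hm | hm
  · rcases hm with rfl | rfl | rfl
    · rw [potS_E htri j 3]; omega
    · rw [potS_E htri j 2]
    · rw [potS_E htri j 1]
  · refine pot_nest _ _ _ ?_ ?_ v hm
    · rw [gT_S htri j, gT_T htri j]; omega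
    · rintro w (rfl | rfl | rfl)
      · rw [potS_E htri j 3]; omega
      · rw [potS_E htri j 2]; omega
      · rw [potS_E htri j 1]; omega

/-- the central chain stays out of the interiors of the side triangles -/
lemma chout (j : ℕ) : ∀ l, ¬ 2 ≤ A.pot (A.desc a b c (j+3)) (A.desc a b c (j+2))
    (A.desc a b c j) (A.desc a b c l) := by
  intro l hc
  rcases le_or_gt l (j+3) with hl | hl
  · have hle : A.pot (A.desc a b c (j+3)) (A.desc a b c (j+2)) (A.desc a b c j)
        (A.desc a b c l) ≤ 1 := by
      apply pot_le_one
      rw [gT_S htri j]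
      have := desc_gen htri l
      omega
    omega
  · obtain ⟨m, rfl⟩ : ∃ m, l = (j+1) + 3 + m := ⟨l - j - 4, by omega⟩
    have hsib := pot_desc_shift htri (j+1) m
    have hdisjS : ∀ v, ¬(2 ≤ A.pot (A.desc a b c (j+3)) (A.desc a b c (j+2))
        (A.desc a b c j) v ∧
        2 ≤ A.pot (A.desc a b c (j+1+2)) (A.desc a b c (j+1+1)) (A.desc a b c (j+1)) v) := by
      apply pot_disj
      · intro w hw hcc
        have hgt := (pot_ge_two _ _ _ hcc).1
        rw [gT_tri (tri_desc_triple htri (j+1)), desc_gen htri (j+1+2)] at hgt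
        rcases hw with rfl | rfl | rfl <;>
          simp only [desc_gen htri] at hgt <;> omega
      · intro w hw hcc
        have hgt := (pot_ge_two _ _ _ hcc).1
        rw [gT_S htri j] at hgt
        rcases hw with rfl | rfl | rfl <;>
          simp only [desc_gen htri] at hgt <;> omega
      · intro w1 w2 w3 a1 b1 a2 b2 a3 b3
        have red : ∀ w : A.Vert,
            (w = A.desc a b c (j+3) ∨ w = A.desc a b c (j+2) ∨ w = A.desc a b c j) →
            (w = A.desc a b c (j+1+2) ∨ w = A.desc a b c (j+1+1) ∨ w = A.desc a b c (j+1)) →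
            (w = A.desc a b c (j+3) ∨ w = A.desc a b c (j+2)) := by
          rintro w (rfl | rfl | rfl) hb
          · left; rfl
          · right; rfl
          · exfalso
            rcases hb with h | h | h <;> (have := desc_inj htri h; omega)
        exact three_in_two (red _ a1 b1) (red _ a2 b2) (red _ a3 b3)
    refine hdisjS (A.desc a b c (j+1+3+m)) ⟨hc, ?_⟩
    rw [hsib]
    omega

lemma sdisj {j j' : ℕ} (hlt : j < j') :
    ∀ v, ¬(2 ≤ A.pot (A.desc a b c (j+3)) (A.desc a b c (j+2)) (A.desc a b c j) v ∧
      2 ≤ A.pot (A.desc a b c (j'+3)) (A.desc a b c (j'+2)) (A.desc a b c j') v) := by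
  apply pot_disj
  · intro w hw hcc
    have hgt := (pot_ge_two _ _ _ hcc).1
    rw [gT_S htri j'] at hgt
    rcases hw with rfl | rfl | rfl <;>
      simp only [desc_gen htri] at hgt <;> omega
  · intro w hw hcc
    rcases hw with rfl | rfl | rfl <;> exact chout htri j _ hcc
  · intro w1 w2 w3 a1 b1 a2 b2 a3 b3
    have red : ∀ w : A.Vert,
        (w = A.desc a b c (j+3) ∨ w = A.desc a b c (j+2) ∨ w = A.desc a b c j) →
        (w = A.desc a b c (j'+3) ∨ w = A.desc a b c (j'+2) ∨ w = A.desc a b c j') →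
        ∃ l : ℕ, w = A.desc a b c l ∧ (l = j+3 ∨ l = j+2 ∨ l = j) ∧
          (l = j'+3 ∨ l = j'+2 ∨ l = j') := by
      rintro w (rfl | rfl | rfl) hb
      · refine ⟨j+3, rfl, by omega, ?_⟩
        rcases hb with h | h | h <;> (have := desc_inj htri h; omega)
      · refine ⟨j+2, rfl, by omega, ?_⟩
        rcases hb with h | h | h <;> (have := desc_inj htri h; omega)
      · refine ⟨j, rfl, by omega, ?_⟩
        rcases hb with h | h | h <;> (have := desc_inj htri h; omega)
    obtain ⟨l1, rfl, hl1, hl1'⟩ := red _ a1 b1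
    obtain ⟨l2, rfl, hl2, hl2'⟩ := red _ a2 b2
    obtain ⟨l3, rfl, hl3, hl3'⟩ := red _ a3 b3
    have : l1 = l2 ∨ l1 = l3 ∨ l2 = l3 := by omega
    rcases this with h | h | h
    · left; rw [h]
    · right; left; rw [h]
    · right; right; rw [h]

lemma tdisj {j j' : ℕ} (hne : j ≠ j') :
    ∀ v, ¬(1 ≤ A.pot (A.chainE a b c j 3) (A.chainE a b c j 2) (A.chainE a b c j 1) v ∧
      1 ≤ A.pot (A.chainE a b c j' 3) (A.chainE a b c j' 2) (A.chainE a b c j' 1) v) := by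
  rintro v ⟨h1, h2⟩
  have c1 := clin htri j v h1
  have c2 := clin htri j' v h2
  rcases Nat.lt_or_ge j j' with hlt | hge
  · exact sdisj htri hlt v ⟨c1, c2⟩
  · have hlt : j' < j := by omega
    exact sdisj htri hlt v ⟨c2, c1⟩

lemma case_big {k N : ℕ} (hga : A.gen a = 1)
    (hN : 4 ≤ N) (hkN : 6 * N ≤ k + 8)
    (S : Finset {v : A.Vert // A.gen v ≤ k}) (hS : IsPorousExpDomSet (A.G k) S) :
    N ≤ S.card := by
  have hk10 : N + 9 ≤ k := by omega
  set rr := 1 + (k - N - 9)/3 with hrr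
  have hgenE : ∀ j i : ℕ, A.gen (A.chainE a b c j i) = 6 + j + i := by
    intro j i; rw [chainE_gen htri]; omega
  set xx : Fin N → {v : A.Vert // A.gen v ≤ k} :=
    fun j => ⟨A.chainE a b c j (4 + (k - j - 10)), by
      rw [hgenE]; have := j.isLt; omega⟩ with hxx
  have hpotx : ∀ j : Fin N, A.pot (A.chainE a b c j 3) (A.chainE a b c j 2)
      (A.chainE a b c j 1) (xx j).1 = 2 + (k - j - 10)/3 := fun j => potT_E htri j _
  have hfar : ∀ i j : Fin N, i ≠ j → (A.G k).Reachable (xx i) (xx j) →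
      2 * rr + 1 ≤ (A.G k).dist (xx i) (xx j) := by
    intro i j hij hre
    have hd := pot_pair_dist (tdisj htri (fun h => hij (Fin.ext h))) (xx i) (xx j)
      (by rw [hpotx i]; omega) (by rw [hpotx j]; omega) hre
    rw [hpotx i, hpotx j] at hd
    have hi := i.isLt
    have hj := j.isLt
    have d1 : (k - N - 9)/3 ≤ (k - i - 10)/3 := Nat.div_le_div_right (by omega)
    have d2 : (k - N - 9)/3 ≤ (k - j - 10)/3 := Nat.div_le_div_right (by omega)
    omega
  have hff := farFamily (A.G k) S hS N rr xx hfar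
  have hpow : N ≤ 2 ^ rr := by
    have hb : ∀ M : ℕ, 4 ≤ M → M ≤ 2 ^ (1 + (5*M - 17)/3) := by
      intro M hM
      induction M with
      | zero => omega
      | succ n ih =>
        rcases Nat.lt_or_ge n 4 with h4 | h4
        · have hn : n = 3 := by omega
          subst hn; norm_num
        · have hih := ih h4
          have hexp : 1 + (5*n - 17)/3 + 1 ≤ 1 + (5*(n+1) - 17)/3 := by omega
          calc n+1 ≤ 2*n := by omega
            _ ≤ 2 * 2^(1+(5*n-17)/3) := by omega
            _ = 2^(1+(5*n-17)/3 + 1) := by rw [pow_succ]; ring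
            _ ≤ 2^(1+(5*(n+1)-17)/3) := Nat.pow_le_pow_right (by norm_num) hexp
    calc N ≤ 2^(1 + (5*N-17)/3) := hb N hN
      _ ≤ 2^rr := Nat.pow_le_pow_right (by norm_num)
          (by
            have : (5*N - 17)/3 ≤ (k - N - 9)/3 := Nat.div_le_div_right (by omega)
            omega)
  omega

end BigFamily

end ApollonianNetwork

theorem stmt2 (A : ApollonianNetwork) (k : ℕ) (hk : 1 ≤ k) :
    (⌈(2 * (k : ℚ) + 5) / 12⌉.toNat : ℕ∞) ≤ porousExpDomNum (A.G k) := by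
  classical
  obtain ⟨a, b, c, hab, hac, hbc, hU⟩ := A.U1_card
  have hga : A.gen a = 1 := (Set.ext_iff.1 hU a).2 (by simp)
  have hgb : A.gen b = 1 := (Set.ext_iff.1 hU b).2 (by simp)
  have hgc : A.gen c = 1 := (Set.ext_iff.1 hU c).2 (by simp)
  set N := (⌈(2 * (k : ℚ) + 5) / 12⌉).toNat with hN
  have main : ∀ S : Finset {v : A.Vert // A.gen v ≤ k},
      IsPorousExpDomSet (A.G k) S → N ≤ S.card := by
    intro S hS
    have hql : (0:ℚ) < (2 * (k : ℚ) + 5) / 12 := by positivity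
    have hc0 : (0:ℤ) ≤ ⌈(2 * (k : ℚ) + 5) / 12⌉ := Int.ceil_nonneg (le_of_lt hql)
    have hNZ : (N : ℤ) = ⌈(2 * (k : ℚ) + 5) / 12⌉ := by
      rw [hN]; exact Int.toNat_of_nonneg hc0
    have hub : 12 * N ≤ 2 * k + 16 := by
      have h1 : (⌈(2 * (k : ℚ) + 5) / 12⌉ : ℚ) < (2 * (k : ℚ) + 5) / 12 + 1 :=
        Int.ceil_lt_add_one _
      rw [← hNZ] at h1
      push_cast at h1
      have h2 : (12 * N : ℚ) < 2 * (k:ℚ) + 17 := by linarith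
      have h3 : (12 * N : ℕ) < 2 * k + 17 := by exact_mod_cast h2
      omega
    rcases Nat.lt_or_ge N 2 with h2 | h2
    · have h1 := ApollonianNetwork.case_one hab hac hbc hga hgb hgc hk S hS
      omega
    rcases Nat.lt_or_ge N 3 with h3 | h3
    · have hk4 : 4 ≤ k := by
        have hi : (1:ℤ) < ⌈(2 * (k : ℚ) + 5) / 12⌉ := by omega
        have hq := Int.lt_ceil.1 hi
        have : (12:ℚ) < 2 * (k:ℚ) + 5 := by
          rw [lt_div_iff₀ (by norm_num : (0:ℚ) < 12)] at hq
          push_cast at hq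
          linarith
        have : (12:ℕ) < 2 * k + 5 := by exact_mod_cast this
        omega
      have := ApollonianNetwork.case_two hab hac hbc hga hgb hgc hk4 S hS
      omega
    rcases Nat.lt_or_ge N 4 with h4 | h4
    · have hk9 : 9 ≤ k := by
        have hi : (2:ℤ) < ⌈(2 * (k : ℚ) + 5) / 12⌉ := by omega
        have hq := Int.lt_ceil.1 hi
        have : (24:ℚ) < 2 * (k:ℚ) + 5 := by
          rw [lt_div_iff₀ (by norm_num : (0:ℚ) < 12)] at hq
          push_cast at hq
          linarith
        have : (24:ℕ) < 2 * k + 5 := by exact_mod_cast this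
        omega
      have := ApollonianNetwork.case_three hab hac hbc hga hgb hgc hk9 S hS
      omega
    · have htri := ApollonianNetwork.tri_abc hab hac hbc hga hgb hgc
      have := ApollonianNetwork.case_big htri hga h4 (by omega) S hS
      omega
  unfold porousExpDomNum
  apply le_sInf
  rintro n ⟨S, hSdom, rfl⟩
  exact_mod_cast main S hSdom
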